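/- A permutation p of length n has exactly n distinct (n−1)-patterns (the maximum possible) if and only if p contains no bond, i.e., |p_i − p_{i+1}| ≠ 1 for all i ∈ [n−1]. -/

import Mathlib

open Finset

/-- `del p i`: delete the `i`-th entry of `p` and relabel order-isomorphically. -/
def del {n : ℕ} (p : Equiv.Perm (Fin (n + 1))) (i : Fin (n + 1)) : Equiv.Perm (Fin n) :=
  (Tuple.sort fun j => p (i.succAbove j))⁻¹

/-- `D1 p`: the set of `(n-1)`-patterns of `p`. -/
def D1 {n : ℕ} (p : Equiv.Perm (Fin (n + 1))) : Finset (Equiv.Perm (Fin n)) :=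
  Finset.univ.image (del p)

/-- `ins q j k`: insert the value `k - 1/2` just left of position `j` and relabel. -/
def ins {n : ℕ} (q : Equiv.Perm (Fin n)) (j k : Fin (n + 1)) : Equiv.Perm (Fin (n + 1)) :=
  (finSuccEquiv' j).trans ((Equiv.optionCongr q).trans (finSuccEquiv' k).symm)

/-- `C p`: the number of bonds of `p` (adjacent positions with values differing by 1). -/
def C {n : ℕ} (p : Equiv.Perm (Fin (n + 1))) : ℕ :=
  (Finset.univ.filter fun i : Fin n =>
    Nat.dist (p i.castSucc).val (p i.succ).val = 1).card

/-- minimum gap of an injective word `f`, via the taxicab metric on (index, value). -/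
noncomputable def mgF {n : ℕ} (f : Fin n → ℕ) : ℕ :=
  sInf {m : ℕ | ∃ i j : Fin n, i < j ∧ Nat.dist i.val j.val + Nat.dist (f i) (f j) = m}

/-- minimum gap of a permutation. -/
noncomputable def mg {n : ℕ} (p : Equiv.Perm (Fin n)) : ℕ := mgF fun i => (p i).val

/-- the span of entries `p i` and `p j`: indices of entries strictly between them
horizontally or vertically. -/
def span {n : ℕ} (p : Equiv.Perm (Fin n)) (i j : Fin n) : Finset (Fin n) :=
  Finset.univ.filter fun m =>
    (i < m ∧ m < j) ∨ (min (p i) (p j) < p m ∧ p m < max (p i) (p j))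

/-- the pattern of `p` after deleting the entries at positions in `S`, encoded as the
list of (0-based) ranks of the remaining entries in positional order. -/
def patList {n : ℕ} (p : Equiv.Perm (Fin n)) (S : Finset (Fin n)) : List ℕ :=
  let l := (Sᶜ.sort (· ≤ ·)).map fun t => (p t).val
  l.map fun v => (l.filter fun w => w < v).length

/-- `Dk p k`: the set of distinct `(n-k)`-patterns of `p`. -/
def Dk {n : ℕ} (p : Equiv.Perm (Fin n)) (k : ℕ) : Finset (List ℕ) :=
  (Finset.univ.filter fun S : Finset (Fin n) => S.card = k).image (patList p)

lemma cardIio {n : ℕ} (a : Fin n) : (univ.filter fun l : Fin n => l < a).card = a.val := by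
  rw [show (univ.filter fun l : Fin n => l < a) = Finset.Iio a by ext; simp]
  simp [Fin.card_Iio]

lemma sortRank {n : ℕ} {α : Type*} [LinearOrder α] {f : Fin n → α} (hf : Function.Injective f)
    (k : Fin n) : (((Tuple.sort f)⁻¹ k : Fin n) : ℕ) = (univ.filter fun l => f l < f k).card := by
  set σ := Tuple.sort f
  have hmono : StrictMono (f ∘ σ) := (Tuple.monotone_sort f).strictMono_of_injective
    (hf.comp σ.injective)
  have key : ∀ l, f l < f k ↔ σ⁻¹ l < σ⁻¹ k := by
    intro l
    rw [← hmono.lt_iff_lt]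
    simp [σ]
  rw [show (univ.filter fun l => f l < f k) = (univ.filter fun m => m < σ⁻¹ k).map σ.toEmbedding
    by ext m; simp [key, Equiv.eq_symm_apply]]
  rw [Finset.card_map, cardIio]

lemma cardPlt {n : ℕ} (p : Equiv.Perm (Fin n)) (v : Fin n) :
    (univ.filter fun m => p m < v).card = v.val := by
  rw [show (univ.filter fun m => p m < v) = (univ.filter fun w => w < v).map p⁻¹.toEmbedding by
    ext m; simp [Finset.mem_map_equiv, Equiv.Perm.inv_def]]
  rw [Finset.card_map, cardIio]

lemma delVal {n : ℕ} (p : Equiv.Perm (Fin (n + 1))) (i : Fin (n + 1)) (k : Fin n) :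
    ((del p i k : Fin n) : ℕ) =
      (p (i.succAbove k)).val - (if p i < p (i.succAbove k) then 1 else 0) := by
  have hf : Function.Injective fun j : Fin n => p (i.succAbove j) :=
    p.injective.comp (Fin.succAbove_right_injective)
  set v := p (i.succAbove k) with hv
  rw [show del p i k = (Tuple.sort fun j : Fin n => p (i.succAbove j))⁻¹ k from rfl, sortRank hf]
  have hmap : (univ.filter fun m : Fin (n+1) => m ≠ i ∧ p m < v) =
      (univ.filter fun l : Fin n => p (i.succAbove l) < v).map (i.succAboveEmb) := by
    ext m
    simp only [Finset.mem_map, Finset.mem_filter, Finset.mem_univ, true_and,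
      Fin.coe_succAboveEmb]
    constructor
    · rintro ⟨hne, hlt⟩
      obtain ⟨l, rfl⟩ := Fin.exists_succAbove_eq hne
      exact ⟨l, hlt, rfl⟩
    · rintro ⟨l, hlt, rfl⟩
      exact ⟨Fin.succAbove_ne i l, hlt⟩
  have h2 : (univ.filter fun l : Fin n => p (i.succAbove l) < v).card =
      v.val - (if p i < v then 1 else 0) := by
    rw [← Finset.card_map (i.succAboveEmb), ← hmap]
    by_cases hiv : p i < v
    · rw [if_pos hiv]
      have : (univ.filter fun m : Fin (n+1) => m ≠ i ∧ p m < v) =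
          (univ.filter fun m : Fin (n+1) => p m < v).erase i := by
        ext m; simp [and_comm]
      rw [this, Finset.card_erase_of_mem (by simp [hiv]), cardPlt]
    · rw [if_neg hiv]
      have : (univ.filter fun m : Fin (n+1) => m ≠ i ∧ p m < v) =
          (univ.filter fun m : Fin (n+1) => p m < v) := by
        ext m
        simp only [Finset.mem_filter, Finset.mem_univ, true_and, and_iff_right_iff_imp]
        intro hlt hmi
        exact hiv (hmi ▸ hlt)
      rw [this, cardPlt]; simp
  exact h2

lemma delEqOfBond {n : ℕ} (p : Equiv.Perm (Fin (n + 1))) (a : Fin n)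
    (h : Nat.dist (p a.castSucc).val (p a.succ).val = 1) :
    del p a.castSucc = del p a.succ := by
  have hd : (p a.castSucc).val + 1 = (p a.succ).val ∨
      (p a.succ).val + 1 = (p a.castSucc).val := by
    simp [Nat.dist] at h; omega
  ext k
  rcases eq_or_ne k a with rfl | hk
  · have e1 : k.castSucc.succAbove k = k.succ := Fin.succAbove_of_le_castSucc _ _ le_rfl
    have e2 : k.succ.succAbove k = k.castSucc :=
      Fin.succAbove_of_castSucc_lt _ _ (Fin.castSucc_lt_succ : k.castSucc < k.succ)
    have v1 := delVal p k.castSucc k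
    have v2 := delVal p k.succ k
    rw [e1] at v1
    rw [e2] at v2
    rw [v1, v2]
    simp only [Fin.lt_iff_val_lt_val]
    split_ifs <;> omega
  · have e : k.castSucc ≠ a.castSucc := fun h => hk (Fin.castSucc_injective _ h)
    have hsame : a.castSucc.succAbove k = a.succ.succAbove k := by
      rcases lt_or_gt_of_ne (fun h : k = a => hk h) with hlt | hlt
      · rw [Fin.succAbove_of_castSucc_lt _ _ (by exact_mod_cast Fin.castSucc_lt_castSucc_iff.2 hlt),
          Fin.succAbove_of_castSucc_lt _ _ ((Fin.castSucc_lt_castSucc_iff.2 hlt).trans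
            (Fin.castSucc_lt_succ : a.castSucc < a.succ))]
      · have h1 : a.castSucc ≤ k.castSucc := (Fin.castSucc_lt_castSucc_iff.2 hlt).le
        have h2 : a.succ ≤ k.castSucc := by
          rw [Fin.succ_le_castSucc_iff]; exact Fin.castSucc_lt_castSucc_iff.2 hlt
        rw [Fin.succAbove_of_le_castSucc _ _ h1, Fin.succAbove_of_le_castSucc _ _ h2]
    have hne1 : a.castSucc.succAbove k ≠ a.succ := by
      intro hcontra
      have : a.castSucc.succAbove k = a.castSucc.succAbove a := by
        rw [hcontra, Fin.succAbove_of_le_castSucc _ _ le_rfl]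
      exact hk (Fin.succAbove_right_injective this)
    have hne2 : a.castSucc.succAbove k ≠ a.castSucc := Fin.succAbove_ne _ _
    have v1 := delVal p a.castSucc k
    have v2 := delVal p a.succ k
    rw [← hsame] at v2
    have hv1 : (p (a.castSucc.succAbove k)).val ≠ (p a.castSucc).val :=
      fun h => hne2 (p.injective (Fin.val_injective h))
    have hv2 : (p (a.castSucc.succAbove k)).val ≠ (p a.succ).val :=
      fun h => hne1 (p.injective (Fin.val_injective h))
    rw [v1, v2]
    have hiff : (p a.castSucc < p (a.castSucc.succAbove k)) ↔
        (p a.succ < p (a.castSucc.succAbove k)) := by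
      simp only [Fin.lt_iff_val_lt_val]
      omega
    rw [if_congr hiff rfl rfl]

lemma bondOfDelEq {n : ℕ} (p : Equiv.Perm (Fin (n + 1))) {i j : Fin (n + 1)} (hij : i < j)
    (hd : del p i = del p j) : ∃ a : Fin n, Nat.dist (p a.castSucc).val (p a.succ).val = 1 := by
  have hi : i.val < n := lt_of_lt_of_le (Fin.lt_iff_val_lt_val.1 hij) (Nat.le_of_lt_succ j.is_lt)
  set a : Fin n := ⟨i.val, hi⟩ with ha
  have hci : a.castSucc = i := by ext; rfl
  have e1 : i.succAbove a = a.succ := by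
    rw [← hci]; exact Fin.succAbove_of_le_castSucc _ _ le_rfl
  have e2 : j.succAbove a = a.castSucc :=
    Fin.succAbove_of_castSucc_lt _ _ (by rw [hci]; exact hij)
  have v1 := delVal p i a
  have v2 := delVal p j a
  rw [e1] at v1
  rw [e2, hci] at v2
  have heq : (del p i a : Fin n).val = (del p j a : Fin n).val := by rw [hd]
  rw [v1, v2] at heq
  have hne : (p a.succ).val ≠ (p i).val := by
    intro h
    have : a.succ = i := p.injective (Fin.val_injective h)
    rw [← hci] at this
    exact (Fin.castSucc_lt_succ : a.castSucc < a.succ).ne' this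
  refine ⟨a, ?_⟩
  rw [hci]
  simp only [Fin.lt_iff_val_lt_val] at heq
  simp only [Nat.dist]
  split_ifs at heq <;> omega

theorem stmt2 {n : ℕ} (p : Equiv.Perm (Fin (n + 1))) :
    (D1 p).card = n + 1 ↔
      ∀ i : Fin n, Nat.dist (p i.castSucc).val (p i.succ).val ≠ 1 := by
  rw [D1]
  have hcard : (Finset.univ : Finset (Fin (n+1))).card = n + 1 := by simp
  have key := Finset.card_image_iff (f := del p) (s := (Finset.univ : Finset (Fin (n+1))))
  rw [hcard] at key
  rw [key]
  constructor
  · intro hinj a hbond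
    have := hinj (Finset.mem_univ a.castSucc) (Finset.mem_univ a.succ) (delEqOfBond p a hbond)
    exact (Fin.castSucc_lt_succ : a.castSucc < a.succ).ne this
  · intro hno i _ j _ hd
    by_contra hne
    rcases lt_or_gt_of_ne hne with h | h
    · obtain ⟨a, hb⟩ := bondOfDelEq p h hd
      exact hno a hb
    · obtain ⟨a, hb⟩ := bondOfDelEq p h hd.symm
      exact hno a hb
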